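/- If f, g, h ∈ ℤ[x₁,…,xₙ] satisfy f² + g² = h² and the image of (f,g,h) on ℤⁿ contains a triple with odd first coordinate, then writing d = gcd(g,h), φ = f/d, ψ = g/d, θ = h/d, the polynomials θ+ψ and θ−ψ are coprime in ℤ[x₁,…,xₙ]. -/

import Mathlib

theorem quotients_coprime (n : ℕ) (f g h d φ ψ θ : MvPolynomial (Fin n) ℤ)
    (hfgh : f ^ 2 + g ^ 2 = h ^ 2)
    (hodd : ∃ v : Fin n → ℤ, Odd (MvPolynomial.eval v f))
    (hdg : d ∣ g) (hdh : d ∣ h)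
    (hgcd : ∀ e : MvPolynomial (Fin n) ℤ, e ∣ g → e ∣ h → e ∣ d)
    (hφ : f = d * φ) (hψ : g = d * ψ) (hθ : h = d * θ) :
    ∀ e : MvPolynomial (Fin n) ℤ, e ∣ (θ + ψ) → e ∣ (θ - ψ) → IsUnit e := by
  intro e he1 he2
  obtain ⟨v, hv⟩ := hodd
  set ev : MvPolynomial (Fin n) ℤ →+* ℤ := (MvPolynomial.eval v) with hev
  have hfd : ev f = ev d * ev φ := by rw [hφ, map_mul]
  have hodds : Odd (ev d) ∧ Odd (ev φ) := Int.odd_mul.1 (hfd ▸ hv)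
  have hedv : ev d ≠ 0 := by
    intro h0
    have := hodds.1
    rw [h0] at this
    simpa using this
  have hdne : d ≠ 0 := by rintro rfl; simp at hedv
  have h1 : (ev d)^2 * ((ev φ)^2 + (ev ψ)^2) = (ev d)^2 * (ev θ)^2 := by
    have := congrArg ev hfgh
    rw [hφ, hψ, hθ] at this
    simp only [map_add, map_pow, map_mul] at this
    ring_nf
    ring_nf at this
    linarith
  have h2 : (ev φ)^2 + (ev ψ)^2 = (ev θ)^2 :=
    mul_left_cancel₀ (pow_ne_zero 2 hedv) h1
  have key : (ev θ + ev ψ) * (ev θ - ev ψ) = (ev φ)^2 := by ring_nf; linarith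
  have hoddsum : Odd (ev (θ + ψ)) := by
    have : Odd ((ev θ + ev ψ) * (ev θ - ev ψ)) := key ▸ hodds.2.pow
    rw [map_add]
    exact (Int.odd_mul.1 this).1
  by_contra hne
  have hene : e ≠ 0 := by
    rintro rfl
    rw [zero_dvd_iff] at he1
    rw [he1] at hoddsum
    simpa using hoddsum
  obtain ⟨p, hpirr, hpe⟩ := WfDvdMonoid.exists_irreducible_factor hne hene
  have hp : Prime p := UniqueFactorizationMonoid.irreducible_iff_prime.1 hpirr
  have hp2θ : p ∣ 2 * θ := by
    have : p ∣ (θ + ψ) + (θ - ψ) := dvd_add (hpe.trans he1) (hpe.trans he2)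
    convert this using 1; ring
  have hp2ψ : p ∣ 2 * ψ := by
    have : p ∣ (θ + ψ) - (θ - ψ) := dvd_sub (hpe.trans he1) (hpe.trans he2)
    convert this using 1; ring
  rcases hp.2.2 _ _ hp2θ with hp2 | hpθ
  · -- p ∣ 2, so 2 ∣ θ + ψ, contradicting oddness
    have h2irr : Irreducible (2 : MvPolynomial (Fin n) ℤ) := by
      have : Prime (MvPolynomial.C (2 : ℤ) : MvPolynomial (Fin n) ℤ) :=
        (MvPolynomial.prime_C_iff _).2 Int.prime_two
      simpa using this.irreducible
    obtain ⟨c, hc⟩ := hp2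
    rcases h2irr.isUnit_or_isUnit hc with hu | hu
    · exact absurd hu hp.not_isUnit
    · have h2p : (2 : MvPolynomial (Fin n) ℤ) ∣ p := by
        obtain ⟨u, hu'⟩ := hu
        refine ⟨↑u⁻¹, ?_⟩
        rw [hc, ← hu']
        rw [mul_assoc, Units.mul_inv, mul_one]
      have h2sum : (2 : MvPolynomial (Fin n) ℤ) ∣ (θ + ψ) := h2p.trans (hpe.trans he1)
      obtain ⟨k, hk⟩ := h2sum
      have : Even (ev (θ + ψ)) := ⟨ev k, by rw [hk, map_mul, map_ofNat]; ring⟩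
      exact (Int.not_even_iff_odd.2 hoddsum) this
  · rcases hp.2.2 _ _ hp2ψ with hp2 | hpψ
    · have h2irr : Irreducible (2 : MvPolynomial (Fin n) ℤ) := by
        have : Prime (MvPolynomial.C (2 : ℤ) : MvPolynomial (Fin n) ℤ) :=
          (MvPolynomial.prime_C_iff _).2 Int.prime_two
        simpa using this.irreducible
      obtain ⟨c, hc⟩ := hp2
      rcases h2irr.isUnit_or_isUnit hc with hu | hu
      · exact absurd hu hp.not_isUnit
      · have h2p : (2 : MvPolynomial (Fin n) ℤ) ∣ p := by
          obtain ⟨u, hu'⟩ := hu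
          refine ⟨↑u⁻¹, ?_⟩
          rw [hc, ← hu']
          rw [mul_assoc, Units.mul_inv, mul_one]
        have h2sum : (2 : MvPolynomial (Fin n) ℤ) ∣ (θ + ψ) := h2p.trans (hpe.trans he1)
        obtain ⟨k, hk⟩ := h2sum
        have : Even (ev (θ + ψ)) := ⟨ev k, by rw [hk, map_mul, map_ofNat]; ring⟩
        exact (Int.not_even_iff_odd.2 hoddsum) this
    · -- p ∣ θ and p ∣ ψ
      have hdpg : d * p ∣ g := by rw [hψ]; exact mul_dvd_mul_left d hpψ
      have hdph : d * p ∣ h := by rw [hθ]; exact mul_dvd_mul_left d hpθ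
      have : d * p ∣ d := hgcd _ hdpg hdph
      have hp1 : p ∣ 1 := by
        have := (mul_dvd_mul_iff_left hdne).1 (by simpa using this : d * p ∣ d * 1)
        exact this
      exact hp.not_isUnit (isUnit_of_dvd_one hp1)
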